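/- Let K be a field, G a finite group, H a subgroup of G, and c \in KH a nonzero element such that the right ideal c·KH of KH is 1-dimensional over K. Then the right ideal C = c·KG of KG satisfies dim_K(C) = [G : H] and d(C) \cdot dim_K(C) = |G|, where d(C) = |H| = wt(c). -/

import Mathlib

open MonoidAlgebra

attribute [local instance] Classical.propDecidable

/-- Coefficientwise (Schur) product on the group algebra. -/
noncomputable def schur {K G : Type*} [Semiring K] (f g : MonoidAlgebra K G) :
    MonoidAlgebra K G :=
  MonoidAlgebra.ofCoeff (Finsupp.zipWith (· * ·) (mul_zero 0) f.coeff g.coeff)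

/-- `C` is a right ideal of the group algebra. -/
def IsRightIdeal {K G : Type*} [Field K] [Group G]
    (C : Submodule K (MonoidAlgebra K G)) : Prop :=
  ∀ c ∈ C, ∀ v : MonoidAlgebra K G, c * v ∈ C

/-- If `c ∈ KH` is nonzero and `c·KH` is one-dimensional, then `C = c·KG` satisfies
`dim C = [G:H]`, `wt c = |H|`, `d(C) = |H|` and `d(C) · dim C = |G|`. -/
theorem stmt5 {K G : Type*} [Field K] [Group G] [Fintype G]
    (H : Subgroup G) (c : MonoidAlgebra K G) (hc : c ≠ 0)
    (hsupp : ↑c.coeff.support ⊆ (H : Set G))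
    (hdim : Module.finrank K ↥(Submodule.span K {x : MonoidAlgebra K G |
      ∃ v : MonoidAlgebra K G, ↑v.coeff.support ⊆ (H : Set G) ∧ x = c * v}) = 1) :
    Module.finrank K ↥(LinearMap.range (LinearMap.mulLeft K c)) = H.index ∧
    c.coeff.support.card = Nat.card H ∧
    IsLeast {w | ∃ x ∈ LinearMap.range (LinearMap.mulLeft K c),
      x ≠ 0 ∧ x.coeff.support.card = w} (Nat.card H) ∧
    Nat.card H * Module.finrank K ↥(LinearMap.range (LinearMap.mulLeft K c)) =
      Fintype.card G := by
  classical
  have finst : Module.Finite K (MonoidAlgebra K G) :=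
    inferInstanceAs (Module.Finite K (MonoidAlgebra K G))
  set S := Submodule.span K {x : MonoidAlgebra K G |
      ∃ v : MonoidAlgebra K G, ↑v.coeff.support ⊆ (H : Set G) ∧ x = c * v} with hSdef
  have hcS : Submodule.span K {c} ≤ S := by
    rw [Submodule.span_le, Set.singleton_subset_iff]
    refine Submodule.subset_span ⟨1, ?_, (mul_one c).symm⟩
    intro g hg
    rw [MonoidAlgebra.one_def] at hg
    have := Finsupp.support_single_subset hg
    simp only [Finset.mem_singleton] at this
    subst this
    exact H.one_mem
  have hSeq : Submodule.span K {c} = S :=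
    Submodule.eq_of_le_of_finrank_le hcS (by rw [hdim, finrank_span_singleton hc])
  -- each right translate by h ∈ H is a scalar multiple of c
  have hlam : ∀ h ∈ H, ∃ l : K, c * single h 1 = l • c := by
    intro h hh
    have hx : c * single h (1 : K) ∈ S := by
      refine Submodule.subset_span ⟨single h 1, ?_, rfl⟩
      intro g hg
      have := Finsupp.support_single_subset hg
      simp only [Finset.mem_singleton] at this
      subst this; exact hh
    rw [← hSeq, Submodule.mem_span_singleton] at hx
    obtain ⟨l, hl⟩ := hx
    exact ⟨l, hl.symm⟩
  -- support of c is exactly H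
  have hmem : ∀ g : G, c.coeff g ≠ 0 ↔ g ∈ H := by
    intro g
    constructor
    · intro hg; exact hsupp (Finsupp.mem_support_iff.2 hg)
    · intro hg
      obtain ⟨g₀, hg₀⟩ := Finsupp.support_nonempty_iff.2 (mt MonoidAlgebra.coeff_eq_zero.1 hc)
      have hg₀ne : c.coeff g₀ ≠ 0 := Finsupp.mem_support_iff.1 hg₀
      have hg₀H : g₀ ∈ H := hsupp hg₀
      obtain ⟨l, hl⟩ := hlam (g₀⁻¹ * g) (H.mul_mem (H.inv_mem hg₀H) hg)
      have heval := congrArg (fun f : MonoidAlgebra K G => f.coeff g) hl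
      simp only [MonoidAlgebra.coeff_mul_single_apply, mul_one, mul_inv_rev, inv_inv,
        ← mul_assoc, mul_inv_cancel, one_mul] at heval
      intro h0
      rw [show (l • c).coeff g = l * c.coeff g from rfl, h0, mul_zero] at heval
      exact hg₀ne heval
  have hsupp_eq : c.coeff.support = Set.toFinset (H : Set G) := by
    ext g
    simp [Finsupp.mem_support_iff, hmem g]
  have hcard : c.coeff.support.card = Nat.card H := by
    rw [hsupp_eq, Set.toFinset_card, Nat.card_eq_fintype_card]
    exact Fintype.card_congr (Equiv.refl _)
  -- the quotient by right cosets
  set Q := Quotient (QuotientGroup.rightRel H) with hQdef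
  haveI : Fintype Q := Quotient.fintype _
  set b : Q → MonoidAlgebra K G := fun q => c * single q.out 1 with hbdef
  have hQeq : ∀ q q' : Q, q.out * q'.out⁻¹ ∈ H ↔ q' = q := by
    intro q q'
    rw [← QuotientGroup.rightRel_apply]
    exact Quotient.out_equiv_out
  have hbapp : ∀ (q : Q) (x : G), (b q).coeff x = c.coeff (x * q.out⁻¹) := by
    intro q x
    rw [hbdef]
    simp only [MonoidAlgebra.coeff_mul_single_apply, mul_one]
  -- evaluation of b q' at a point h * q.out
  have hbval : ∀ (q q' : Q) (h : G), h ∈ H → q' ≠ q → (b q').coeff (h * q.out) = 0 := by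
    intro q q' h hh hne
    rw [hbapp]
    by_contra h0
    have := (hmem _).1 h0
    rw [mul_assoc] at this
    have : q.out * q'.out⁻¹ ∈ H := by
      have := H.mul_mem (H.inv_mem hh) this
      rwa [← mul_assoc, inv_mul_cancel, one_mul] at this
    exact hne ((hQeq q q').1 this)
  have hbself : ∀ (q : Q) (h : G), (b q).coeff (h * q.out) = c.coeff h := by
    intro q h
    rw [hbapp, mul_assoc, mul_inv_cancel, mul_one]
  have hc1 : c.coeff 1 ≠ 0 := (hmem 1).2 H.one_mem
  -- linear independence
  have hlin : LinearIndependent K b := by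
    rw [linearIndependent_iff']
    intro s g hsum i hi
    have hval : ∑ j ∈ s, g j * (b j).coeff ((1 : G) * i.out) = 0 := by
      have h0 : (∑ j ∈ s, g j • b j).coeff ((1 : G) * i.out) = 0 := by rw [hsum]; rfl
      rw [MonoidAlgebra.coeff_sum, Finset.sum_apply'] at h0
      simpa only [MonoidAlgebra.coeff_smul_apply, smul_eq_mul] using h0
    rw [Finset.sum_eq_single i (fun j hj hji => by
        rw [hbval i j 1 H.one_mem hji, mul_zero]) (fun h => absurd hi h),
      hbself] at hval
    exact (mul_eq_zero.1 hval).resolve_right hc1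
  -- range of mulLeft c = span of range b
  have h1 : ∀ g : G, c * single g (1 : K) ∈ Submodule.span K (Set.range b) := by
    intro g
    have hgH : g * ((⟦g⟧ : Q).out)⁻¹ ∈ H := by
      rw [← QuotientGroup.rightRel_apply]
      exact Quotient.mk_out g
    obtain ⟨l, hl⟩ := hlam _ hgH
    have hfact : single g (1 : K) = single (g * ((⟦g⟧ : Q).out)⁻¹) 1 * single (⟦g⟧ : Q).out 1 := by
      rw [MonoidAlgebra.single_mul_single, one_mul, inv_mul_cancel_right]
    rw [hfact, ← mul_assoc, hl, smul_mul_assoc]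
    exact Submodule.smul_mem _ _ (Submodule.subset_span ⟨⟦g⟧, rfl⟩)
  have hrange : LinearMap.range (LinearMap.mulLeft K c) = Submodule.span K (Set.range b) := by
    apply le_antisymm
    · rintro x ⟨v, rfl⟩
      simp only [LinearMap.mulLeft_apply]
      have hv : c * v = v.coeff.sum fun g a => a • (c * single g 1) := by
        conv_lhs => rw [← MonoidAlgebra.sum_coeff_single v, Finsupp.mul_sum]
        refine Finsupp.sum_congr fun g hg => ?_
        rw [show (single g (v.coeff g) : MonoidAlgebra K G) = v.coeff g • single g 1 by
          rw [MonoidAlgebra.smul_single', mul_one], mul_smul_comm]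
      rw [hv]
      exact Submodule.sum_mem _ fun g hg => Submodule.smul_mem _ _ (h1 g)
    · rw [Submodule.span_le]
      rintro x ⟨q, rfl⟩
      exact ⟨single q.out 1, rfl⟩
  have hfr : Module.finrank K ↥(LinearMap.range (LinearMap.mulLeft K c)) = H.index := by
    rw [hrange, finrank_span_eq_card hlin, Subgroup.index_eq_card,
      ← Nat.card_eq_fintype_card]
    exact Nat.card_congr (QuotientGroup.quotientRightRelEquivQuotientLeftRel H)
  refine ⟨hfr, hcard, ⟨⟨c, ⟨1, mul_one c⟩, hc, hcard⟩, ?_⟩, ?_⟩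
  · rintro w ⟨x, ⟨v, rfl⟩, hx0, rfl⟩
    simp only [LinearMap.mulLeft_apply] at hx0 ⊢
    have hxs : c * v ∈ Submodule.span K (Set.range b) := by
      rw [← hrange]; exact ⟨v, rfl⟩
    obtain ⟨l, hl⟩ := Finsupp.mem_span_range_iff_exists_finsupp.1 hxs
    have hlne : ∃ q, l q ≠ 0 := by
      by_contra h0
      push_neg at h0
      have : l = 0 := Finsupp.ext h0
      rw [this, Finsupp.sum_zero_index] at hl
      exact hx0 hl.symm
    obtain ⟨q, hq⟩ := hlne
    have hqmem : q ∈ l.support := Finsupp.mem_support_iff.2 hq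
    have hsub : Finset.image (· * q.out) (Set.toFinset (H : Set G)) ⊆ (c * v).coeff.support := by
      intro y hy
      obtain ⟨h, hh, rfl⟩ := Finset.mem_image.1 hy
      rw [Set.mem_toFinset] at hh
      rw [Finsupp.mem_support_iff, ← hl]
      rw [Finsupp.sum, MonoidAlgebra.coeff_sum, Finset.sum_apply']
      have hrw : ∀ k : Q, (l k • b k).coeff (h * q.out) = l k * (b k).coeff (h * q.out) := fun k => rfl
      simp only [hrw]
      rw [Finset.sum_eq_single q (fun j hj hji => by
          rw [hbval q j h hh hji, mul_zero]) (fun hn => absurd hqmem hn)]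
      rw [hbself]
      exact mul_ne_zero hq ((hmem h).2 hh)
    have := Finset.card_le_card hsub
    rwa [Finset.card_image_of_injective _ (mul_left_injective q.out),
      Set.toFinset_card,
      (Fintype.card_congr (Equiv.refl _) : Fintype.card (H : Set G) = Fintype.card H),
      ← Nat.card_eq_fintype_card] at this
  · rw [hfr, Subgroup.card_mul_index, Nat.card_eq_fintype_card]
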